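/- Let w(a) = c > 3 for all a ∈ A and w(b) = 1 for all b ∈ B. Let M1, M2 be popular matchings, C a connected component of M1 △ M2, and y a nice witness of M1 or M2. Then on C, the witness y is either 'odd' (takes only values in {−c, 2−c, −1, 1, c−2, c}) or 'even' (takes only values in {1−c, 0, c−1}). -/

import Mathlib

structure PMInstance (V : Type) [Fintype V] [DecidableEq V] where
  A : Finset V
  E : V → V → Prop
  Esymm : ∀ u v : V, E u v → E v u
  loopless : ∀ v : V, ¬ E v v
  bipartite : ∀ u v : V, E u v → (u ∈ A ↔ v ∉ A)
  pref : V → V → V → Prop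
  pref_irrefl : ∀ v u : V, ¬ pref v u u
  pref_trans : ∀ v u z t : V, pref v u z → pref v z t → pref v u t
  pref_asymm : ∀ v u z : V, pref v u z → ¬ pref v z u
  pref_total : ∀ v u z : V, E v u → E v z → u ≠ z → pref v u z ∨ pref v z u
  w : V → ℚ
  w_nonneg : ∀ v : V, 0 ≤ w v

structure Matching (V : Type) [Fintype V] [DecidableEq V] (E : V → V → Prop) where
  m : V → Option V
  msymm : ∀ u v : V, m u = some v ↔ m v = some u
  valid : ∀ u v : V, m u = some v → E u v

attribute [local instance] Classical.propDecidable

variable {V : Type} [Fintype V] [DecidableEq V]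

/-- Vertex `v` prefers matching `M` to matching `M'`. -/
def prefersVx (I : PMInstance V) (M M' : Matching V I.E) (v : V) : Prop :=
  (M'.m v = none ∧ M.m v ≠ none) ∨
    (∃ u u' : V, M.m v = some u ∧ M'.m v = some u' ∧ I.pref v u u')

/-- Total weight of the vertices preferring `M` to `M'`. -/
noncomputable def weightPref (I : PMInstance V) (M M' : Matching V I.E) : ℚ :=
  ∑ v : V, if prefersVx I M M' v then I.w v else 0

/-- A matching is popular if it never loses a weighted head-to-head comparison. -/
def popular (I : PMInstance V) (M : Matching V I.E) : Prop :=
  ∀ M' : Matching V I.E, weightPref I M' M ≤ weightPref I M M'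

/-- The vote of `u` for `v` against its partner in `M`. -/
noncomputable def vote (I : PMInstance V) (M : Matching V I.E) (u v : V) : ℚ :=
  if M.m u = some v then 0
  else if M.m u = none ∨ (∃ z : V, M.m u = some z ∧ I.pref u v z) then I.w u
  else - I.w u

/-- A witness of popularity of `M`. -/
def IsWitness (I : PMInstance V) (M : Matching V I.E) (y : V → ℚ) : Prop :=
  (∑ v : V, y v) = 0 ∧
  (∀ u v : V, I.E u v → vote I M u v + vote I M v u ≤ y u + y v) ∧
  (∀ v : V, M.m v = none → 0 ≤ y v) ∧
  (∀ v : V, - I.w v ≤ y v)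

/-- A nice witness: a witness with values from the six-element candidate sets. -/
def NiceWitness (I : PMInstance V) (M : Matching V I.E) (c : ℚ) (y : V → ℚ) : Prop :=
  IsWitness I M y ∧
    (∀ a ∈ I.A, y a ∈ ({-c, 1 - c, 2 - c, -1, 0, 1} : Set ℚ)) ∧
    (∀ b : V, b ∉ I.A → y b ∈ ({-1, 0, 1, c - 2, c - 1, c} : Set ℚ))

/-- Edge relation of the symmetric difference of two matchings. -/
def symmDiffRel {E : V → V → Prop} (M₁ M₂ : Matching V E) (u v : V) : Prop :=
  (M₁.m u = some v ∧ M₂.m u ≠ some v) ∨ (M₂.m u = some v ∧ M₁.m u ≠ some v)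

/- ======================= auxiliary lemmas ======================= -/

lemma parity_core {c x z : ℚ} (hc : 3 < c)
    (hx : x ∈ ({-c, 1 - c, 2 - c, -1, 0, 1} : Set ℚ))
    (hz : z ∈ ({-1, 0, 1, c - 2, c - 1, c} : Set ℚ))
    (hs : x + z = 0 ∨ x + z = c + 1 ∨ x + z = c - 1 ∨ x + z = 1 - c ∨ x + z = -c - 1) :
    (x ∈ ({-c, 2 - c, -1, 1, c - 2, c} : Set ℚ) ∧ z ∈ ({-c, 2 - c, -1, 1, c - 2, c} : Set ℚ)) ∨
    (x ∈ ({1 - c, 0, c - 1} : Set ℚ) ∧ z ∈ ({1 - c, 0, c - 1} : Set ℚ)) := by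
  simp only [Set.mem_insert_iff, Set.mem_singleton_iff] at hx hz ⊢
  rcases hx with rfl|rfl|rfl|rfl|rfl|rfl <;> rcases hz with rfl|rfl|rfl|rfl|rfl|rfl <;>
    rcases hs with h|h|h|h|h <;>
    first
      | (exfalso; linarith)
      | (left; constructor <;> (norm_num; done))
      | (right; constructor <;> (norm_num; done))

lemma prefersVx_congr {I : PMInstance V} {X X' Y Y' : Matching V I.E} {v : V}
    (h1 : X.m v = X'.m v) (h2 : Y.m v = Y'.m v) :
    prefersVx I X Y v ↔ prefersVx I X' Y' v := by
  unfold prefersVx; rw [h1, h2]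

lemma not_prefersVx_self {I : PMInstance V} {X Y : Matching V I.E} {v : V}
    (h : X.m v = Y.m v) : ¬ prefersVx I X Y v := by
  rintro (⟨h1, h2⟩ | ⟨u, u', hu, hu', hp⟩)
  · exact h2 (h.trans h1)
  · have : some u = some u' := (h.symm.trans hu).symm.trans hu'
    cases this
    exact I.pref_irrefl v u hp

lemma sum_comp_involution {τ : V → V} (hτ : Function.Involutive τ) (f : V → ℚ) :
    ∑ v, f (τ v) = ∑ v, f v :=
  Equiv.sum_comp (Function.Involutive.toPerm τ hτ) f

lemma sum_filter_comp_involution {τ : V → V} (hτ : Function.Involutive τ)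
    {q : V → Prop} (hq : ∀ v, q v → q (τ v)) (f : V → ℚ) :
    (∑ v ∈ Finset.univ.filter q, f (τ v)) = ∑ v ∈ Finset.univ.filter q, f v := by
  refine Finset.sum_nbij' (i := τ) (j := τ) ?_ ?_ ?_ ?_ ?_
  · intro a ha
    simp only [Finset.mem_filter, Finset.mem_univ, true_and] at ha ⊢
    exact hq a ha
  · intro a ha
    simp only [Finset.mem_filter, Finset.mem_univ, true_and] at ha ⊢
    exact hq a ha
  · intro a _; exact hτ a
  · intro a _; exact hτ a
  · intro a _; rfl

/-- partner-or-self map of a matching -/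
def partnerOr {E : V → V → Prop} (X : Matching V E) (v : V) : V := (X.m v).getD v

lemma partnerOr_involutive {E : V → V → Prop} (X : Matching V E) :
    Function.Involutive (partnerOr X) := by
  intro v
  rcases h : X.m v with _ | u
  · simp [partnerOr, h]
  · have h2 := (X.msymm v u).mp h
    simp [partnerOr, h, h2]

lemma partnerOr_some {E : V → V → Prop} {X : Matching V E} {v u : V} (h : X.m v = some u) :
    partnerOr X v = u := by simp [partnerOr, h]

lemma partnerOr_none {E : V → V → Prop} {X : Matching V E} {v : V} (h : X.m v = none) :
    partnerOr X v = v := by simp [partnerOr, h]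

lemma vote_matched {I : PMInstance V} {M : Matching V I.E} {u v : V} (h : M.m u = some v) :
    vote I M u v = 0 := by unfold vote; rw [if_pos h]

lemma vote_pm (I : PMInstance V) (M : Matching V I.E) (u v : V) (h : M.m u ≠ some v) :
    vote I M u v = I.w u ∨ vote I M u v = -I.w u := by
  unfold vote; rw [if_neg h]; split_ifs
  · exact Or.inl rfl
  · exact Or.inr rfl

/-- auxiliary "change of partner" value -/
noncomputable def kAux (I : PMInstance V) (M N : Matching V I.E) (v : V) : ℚ :=
  (N.m v).elim (if M.m v = none then 0 else -I.w v) (fun u => vote I M v u)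

theorem key (I : PMInstance V) (c : ℚ) (hc : 3 < c)
    (hA : ∀ a ∈ I.A, I.w a = c) (hB : ∀ b : V, b ∉ I.A → I.w b = 1)
    (M N : Matching V I.E) (hMpop : popular I M) (hNpop : popular I N)
    (y : V → ℚ) (hy : NiceWitness I M c y)
    (v₀ : V) (hv₀ : ∃ z, symmDiffRel M N v₀ z) :
    (∀ v : V, Relation.ReflTransGen (symmDiffRel M N) v₀ v →
        y v ∈ ({-c, 2 - c, -1, 1, c - 2, c} : Set ℚ)) ∨
      (∀ v : V, Relation.ReflTransGen (symmDiffRel M N) v₀ v →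
        y v ∈ ({1 - c, 0, c - 1} : Set ℚ)) := by
  obtain ⟨⟨hy0, hyE, hyU, hyW⟩, hyA, hyB⟩ := hy
  set p : V → Prop := Relation.ReflTransGen (symmDiffRel M N) v₀ with hpdef
  -- symmetry of the symmetric difference relation
  have Dsymm : ∀ u v : V, symmDiffRel M N u v → symmDiffRel M N v u := by
    rintro u v (⟨h1, h2⟩ | ⟨h1, h2⟩)
    · exact Or.inl ⟨(M.msymm u v).mp h1, fun hcon => h2 ((N.msymm v u).mp hcon)⟩
    · exact Or.inr ⟨(N.msymm u v).mp h1, fun hcon => h2 ((M.msymm v u).mp hcon)⟩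
  -- every vertex of the component is incident to a symm-diff edge
  have hpD : ∀ v, p v → ∃ z, symmDiffRel M N v z := by
    intro v hv
    induction hv with
    | refl => exact hv₀
    | tail _ hbc _ => exact ⟨_, Dsymm _ _ hbc⟩
  have hpM : ∀ v u, p v → M.m v = some u → symmDiffRel M N v u := by
    intro v u hv hvu
    obtain ⟨z, hz⟩ := hpD v hv
    rcases hz with ⟨h1, h2⟩ | ⟨h1, h2⟩
    · have hzu : z = u := by rw [hvu] at h1; exact (Option.some.inj h1).symm
      subst hzu
      exact Or.inl ⟨hvu, h2⟩
    · refine Or.inl ⟨hvu, fun hcon => ?_⟩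
      rw [h1] at hcon
      have hzu : z = u := Option.some.inj hcon
      subst hzu
      exact h2 hvu
  have hpN : ∀ v u, p v → N.m v = some u → symmDiffRel M N v u := by
    intro v u hv hvu
    obtain ⟨z, hz⟩ := hpD v hv
    rcases hz with ⟨h1, h2⟩ | ⟨h1, h2⟩
    · refine Or.inr ⟨hvu, fun hcon => ?_⟩
      rw [h1] at hcon
      have hzu : z = u := Option.some.inj hcon
      subst hzu
      exact h2 hvu
    · have hzu : z = u := by rw [hvu] at h1; exact (Option.some.inj h1).symm
      subst hzu
      exact Or.inr ⟨hvu, h2⟩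
  have hpMc : ∀ v u, p v → M.m v = some u → p u := fun v u hv h => hv.tail (hpM v u hv h)
  have hpNc : ∀ v u, p v → N.m v = some u → p u := fun v u hv h => hv.tail (hpN v u hv h)
  -- complementary slackness of the witness w.r.t. M
  have hslack : ∀ v, y v + y (partnerOr M v) = 0 := by
    have hnn : ∀ v ∈ Finset.univ, (0:ℚ) ≤ y v + y (partnerOr M v) := by
      intro v _
      rcases hMv : M.m v with _ | u
      · rw [partnerOr_none hMv]
        have := hyU v hMv
        linarith
      · rw [partnerOr_some hMv]
        have hE := M.valid v u hMv
        have h0 : vote I M v u = 0 := vote_matched hMv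
        have h0' : vote I M u v = 0 := vote_matched ((M.msymm v u).mp hMv)
        have := hyE v u hE
        linarith
    have hsum : (∑ v, (y v + y (partnerOr M v))) = 0 := by
      rw [Finset.sum_add_distrib, sum_comp_involution (partnerOr_involutive M) y, hy0]
      norm_num
    intro v
    exact (Finset.sum_eq_zero_iff_of_nonneg hnn).mp hsum v (Finset.mem_univ v)
  have hmatch : ∀ v u, M.m v = some u → y v + y u = 0 := by
    intro v u h
    have := hslack v
    rwa [partnerOr_some h] at this
  have hun : ∀ v, M.m v = none → y v = 0 := by
    intro v h
    have := hslack v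
    rw [partnerOr_none h] at this
    linarith
  -- the component is closed under both partner maps
  have hpMσ : ∀ v, p v → p (partnerOr M v) := by
    intro v hv
    rcases hMv : M.m v with _ | u
    · rwa [partnerOr_none hMv]
    · rw [partnerOr_some hMv]; exact hpMc v u hv hMv
  have hpNτ : ∀ v, p v → p (partnerOr N v) := by
    intro v hv
    rcases hNv : N.m v with _ | u
    · rwa [partnerOr_none hNv]
    · rw [partnerOr_some hNv]; exact hpNc v u hv hNv
  -- the witness sums to zero on the component
  have hyC : (∑ v ∈ Finset.univ.filter p, y v) = 0 := by
    have h2 : (∑ v ∈ Finset.univ.filter p, (y v + y (partnerOr M v))) = 0 := by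
      refine Finset.sum_eq_zero fun v _ => ?_
      rcases hMv : M.m v with _ | u
      · rw [partnerOr_none hMv]
        have := hun v hMv
        linarith
      · rw [partnerOr_some hMv]
        exact hmatch v u hMv
    rw [Finset.sum_add_distrib,
      sum_filter_comp_involution (partnerOr_involutive M) hpMσ y] at h2
    linarith
  -- the two swapped matchings
  have swap_msymmM : ∀ (u v : V), (if p u then N.m u else M.m u) = some v →
      (if p v then N.m v else M.m v) = some u := by
    intro u v h
    by_cases pu : p u <;> by_cases pv : p v
    · rw [if_pos pu] at h; rw [if_pos pv]; exact (N.msymm u v).mp h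
    · rw [if_pos pu] at h; rw [if_neg pv]
      by_cases hM' : M.m u = some v
      · exact (M.msymm u v).mp hM'
      · exact absurd (pu.tail (Or.inr ⟨h, hM'⟩)) pv
    · rw [if_neg pu] at h; rw [if_pos pv]
      by_cases hN' : N.m u = some v
      · exact (N.msymm u v).mp hN'
      · exact absurd (pv.tail (Dsymm u v (Or.inl ⟨h, hN'⟩))) pu
    · rw [if_neg pu] at h; rw [if_neg pv]; exact (M.msymm u v).mp h
  have swap_msymmN : ∀ (u v : V), (if p u then M.m u else N.m u) = some v →
      (if p v then M.m v else N.m v) = some u := by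
    intro u v h
    by_cases pu : p u <;> by_cases pv : p v
    · rw [if_pos pu] at h; rw [if_pos pv]; exact (M.msymm u v).mp h
    · rw [if_pos pu] at h; rw [if_neg pv]
      by_cases hN' : N.m u = some v
      · exact (N.msymm u v).mp hN'
      · exact absurd (pu.tail (Or.inl ⟨h, hN'⟩)) pv
    · rw [if_neg pu] at h; rw [if_pos pv]
      by_cases hM' : M.m u = some v
      · exact (M.msymm u v).mp hM'
      · exact absurd (pv.tail (Dsymm u v (Or.inr ⟨h, hM'⟩))) pu
    · rw [if_neg pu] at h; rw [if_neg pv]; exact (N.msymm u v).mp h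
  let Mswap : Matching V I.E :=
    ⟨fun v => if p v then N.m v else M.m v,
     fun u v => ⟨swap_msymmM u v, swap_msymmM v u⟩,
     fun u v h => by
       change (if p u then N.m u else M.m u) = some v at h
       by_cases pu : p u
       · rw [if_pos pu] at h; exact N.valid u v h
       · rw [if_neg pu] at h; exact M.valid u v h⟩
  let Nswap : Matching V I.E :=
    ⟨fun v => if p v then M.m v else N.m v,
     fun u v => ⟨swap_msymmN u v, swap_msymmN v u⟩,
     fun u v h => by
       change (if p u then M.m u else N.m u) = some v at h
       by_cases pu : p u
       · rw [if_pos pu] at h; exact M.valid u v h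
       · rw [if_neg pu] at h; exact N.valid u v h⟩
  have hMswap : ∀ v, Mswap.m v = if p v then N.m v else M.m v := fun _ => rfl
  have hNswap : ∀ v, Nswap.m v = if p v then M.m v else N.m v := fun _ => rfl
  -- Δ computations
  have hΔM : weightPref I Mswap M - weightPref I M Mswap
      = (∑ v ∈ Finset.univ.filter p, (if prefersVx I N M v then I.w v else 0))
        - (∑ v ∈ Finset.univ.filter p, (if prefersVx I M N v then I.w v else 0)) := by
    unfold weightPref
    rw [← Finset.sum_sub_distrib, ← Finset.sum_sub_distrib, Finset.sum_filter]
    refine Finset.sum_congr rfl fun v _ => ?_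
    by_cases pv : p v
    · rw [if_pos pv]
      have h1 : Mswap.m v = N.m v := by rw [hMswap v, if_pos pv]
      have e1 : prefersVx I Mswap M v ↔ prefersVx I N M v := prefersVx_congr h1 rfl
      have e2 : prefersVx I M Mswap v ↔ prefersVx I M N v := prefersVx_congr rfl h1
      simp only [e1, e2]
    · rw [if_neg pv]
      have h1 : Mswap.m v = M.m v := by rw [hMswap v, if_neg pv]
      rw [if_neg (not_prefersVx_self h1), if_neg (not_prefersVx_self h1.symm)]
      norm_num
  have hΔN : weightPref I Nswap N - weightPref I N Nswap
      = (∑ v ∈ Finset.univ.filter p, (if prefersVx I M N v then I.w v else 0))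
        - (∑ v ∈ Finset.univ.filter p, (if prefersVx I N M v then I.w v else 0)) := by
    unfold weightPref
    rw [← Finset.sum_sub_distrib, ← Finset.sum_sub_distrib, Finset.sum_filter]
    refine Finset.sum_congr rfl fun v _ => ?_
    by_cases pv : p v
    · rw [if_pos pv]
      have h1 : Nswap.m v = M.m v := by rw [hNswap v, if_pos pv]
      have e1 : prefersVx I Nswap N v ↔ prefersVx I M N v := prefersVx_congr h1 rfl
      have e2 : prefersVx I N Nswap v ↔ prefersVx I N M v := prefersVx_congr rfl h1
      simp only [e1, e2]
    · rw [if_neg pv]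
      have h1 : Nswap.m v = N.m v := by rw [hNswap v, if_neg pv]
      rw [if_neg (not_prefersVx_self h1), if_neg (not_prefersVx_self h1.symm)]
      norm_num
  have hSNSM : (∑ v ∈ Finset.univ.filter p, (if prefersVx I N M v then I.w v else 0))
      = ∑ v ∈ Finset.univ.filter p, (if prefersVx I M N v then I.w v else 0) := by
    have t1 := hMpop Mswap
    have t2 := hNpop Nswap
    have l1 : weightPref I Mswap M ≤ weightPref I M Mswap := t1
    have l2 : weightPref I Nswap N ≤ weightPref I N Nswap := t2
    linarith [hΔM, hΔN]
  -- δ = k pointwise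
  have hδk : ∀ v, (if prefersVx I N M v then I.w v else 0)
      - (if prefersVx I M N v then I.w v else 0) = kAux I M N v := by
    intro v
    rcases hNv : N.m v with _ | u
    · rcases hMv : M.m v with _ | z
      · rw [if_neg, if_neg]
        · simp [kAux, hNv, hMv]
        · rintro (⟨h1, h2⟩ | ⟨a, b, h1, h2, h3⟩)
          · exact h2 hMv
          · rw [hMv] at h1; exact nomatch h1
        · rintro (⟨h1, h2⟩ | ⟨a, b, h1, h2, h3⟩)
          · exact h2 hNv
          · rw [hNv] at h1; exact nomatch h1
      · rw [if_neg, if_pos]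
        · simp [kAux, hNv, hMv]
        · exact Or.inl ⟨hNv, by rw [hMv]; exact fun hcon => nomatch hcon⟩
        · rintro (⟨h1, h2⟩ | ⟨a, b, h1, h2, h3⟩)
          · rw [hMv] at h1; exact nomatch h1
          · rw [hNv] at h1; exact nomatch h1
    · rcases hMv : M.m v with _ | z
      · rw [if_pos, if_neg]
        · have hv1 : vote I M v u = I.w v := by
            unfold vote
            rw [if_neg (by rw [hMv]; exact fun hcon => nomatch hcon),
              if_pos (Or.inl hMv)]
          simp [kAux, hNv, hv1]
        · rintro (⟨h1, h2⟩ | ⟨a, b, h1, h2, h3⟩)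
          · rw [hNv] at h1; exact nomatch h1
          · rw [hMv] at h1; exact nomatch h1
        · exact Or.inl ⟨hMv, by rw [hNv]; exact fun hcon => nomatch hcon⟩
      · by_cases huz : u = z
        · subst huz
          have heq : N.m v = M.m v := by rw [hNv, hMv]
          rw [if_neg (not_prefersVx_self heq), if_neg (not_prefersVx_self heq.symm)]
          have : kAux I M N v = vote I M v u := by simp [kAux, hNv]
          rw [this, vote_matched hMv]
          norm_num
        · have hEu : I.E v u := N.valid v u hNv
          have hEz : I.E v z := M.valid v z hMv
          have hMvu : M.m v ≠ some u := by
            rw [hMv]; intro hcon; exact huz (Option.some.inj hcon).symm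
          rcases I.pref_total v u z hEu hEz huz with hpr | hpr
          · rw [if_pos (show prefersVx I N M v from Or.inr ⟨u, z, hNv, hMv, hpr⟩), if_neg]
            · have hv1 : vote I M v u = I.w v := by
                unfold vote
                rw [if_neg hMvu, if_pos (show M.m v = none ∨ (∃ z' : V, M.m v = some z' ∧ I.pref v u z') from Or.inr ⟨z, hMv, hpr⟩)]
              simp [kAux, hNv, hv1]
            · rintro (⟨h1, h2⟩ | ⟨a, b, h1, h2, h3⟩)
              · rw [hNv] at h1; exact nomatch h1
              · rw [hMv] at h1; rw [hNv] at h2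
                obtain rfl : z = a := Option.some.inj h1
                obtain rfl : u = b := Option.some.inj h2
                exact I.pref_asymm v u z hpr h3
          · rw [if_neg, if_pos (show prefersVx I M N v from Or.inr ⟨z, u, hMv, hNv, hpr⟩)]
            · have hv1 : vote I M v u = -I.w v := by
                unfold vote
                rw [if_neg hMvu, if_neg]
                rintro (h | ⟨z', h1, h2⟩)
                · rw [hMv] at h; exact nomatch h
                · rw [hMv] at h1
                  obtain rfl : z = z' := Option.some.inj h1
                  exact I.pref_asymm v z u hpr h2
              simp [kAux, hNv, hv1]
            · rintro (⟨h1, h2⟩ | ⟨a, b, h1, h2, h3⟩)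
              · rw [hMv] at h1; exact nomatch h1
              · rw [hNv] at h1; rw [hMv] at h2
                obtain rfl : u = a := Option.some.inj h1
                obtain rfl : z = b := Option.some.inj h2
                exact I.pref_asymm v z u hpr h3
  have hk0 : (∑ v ∈ Finset.univ.filter p, kAux I M N v) = 0 := by
    have : (∑ v ∈ Finset.univ.filter p, kAux I M N v)
        = (∑ v ∈ Finset.univ.filter p, (if prefersVx I N M v then I.w v else 0))
          - (∑ v ∈ Finset.univ.filter p, (if prefersVx I M N v then I.w v else 0)) := by
      rw [← Finset.sum_sub_distrib]
      exact Finset.sum_congr rfl fun v _ => (hδk v).symm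
    rw [this, hSNSM]
    ring
  -- tightness on the component
  have hkv_some : ∀ v u, N.m v = some u → kAux I M N v = vote I M v u := by
    intro v u h; simp [kAux, h]
  have hkv_none : ∀ v, N.m v = none → kAux I M N v = if M.m v = none then 0 else -I.w v := by
    intro v h; simp [kAux, h]
  have hG : ∀ v ∈ Finset.univ.filter p,
      (0:ℚ) ≤ (y v + y (partnerOr N v)) - (kAux I M N v + kAux I M N (partnerOr N v)) := by
    intro v _
    rcases hNv : N.m v with _ | u
    · rw [partnerOr_none hNv, hkv_none v hNv]
      by_cases hMv : M.m v = none
      · rw [if_pos hMv]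
        have := hyU v hMv
        linarith
      · rw [if_neg hMv]
        have := hyW v
        linarith
    · rw [partnerOr_some hNv, hkv_some v u hNv,
        hkv_some u v ((N.msymm v u).mp hNv)]
      have hE := N.valid v u hNv
      have := hyE v u hE
      linarith
  have hGsum : (∑ v ∈ Finset.univ.filter p,
      ((y v + y (partnerOr N v)) - (kAux I M N v + kAux I M N (partnerOr N v)))) = 0 := by
    rw [Finset.sum_sub_distrib, Finset.sum_add_distrib, Finset.sum_add_distrib,
      sum_filter_comp_involution (partnerOr_involutive N) hpNτ y,
      sum_filter_comp_involution (partnerOr_involutive N) hpNτ (kAux I M N),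
      hyC, hk0]
    ring
  have tight : ∀ v u, p v → N.m v = some u →
      y v + y u = vote I M v u + vote I M u v := by
    intro v u hv hvu
    have h0 := (Finset.sum_eq_zero_iff_of_nonneg hG).mp hGsum v
      (Finset.mem_filter.mpr ⟨Finset.mem_univ v, hv⟩)
    rw [partnerOr_some hvu, hkv_some v u hvu, hkv_some u v ((N.msymm v u).mp hvu)] at h0
    linarith
  -- parity propagation along an edge of the component
  have hOdEv : ∀ u v, p u → symmDiffRel M N u v →
      ((y u ∈ ({-c, 2 - c, -1, 1, c - 2, c} : Set ℚ) ∧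
        y v ∈ ({-c, 2 - c, -1, 1, c - 2, c} : Set ℚ)) ∨
       (y u ∈ ({1 - c, 0, c - 1} : Set ℚ) ∧ y v ∈ ({1 - c, 0, c - 1} : Set ℚ))) := by
    intro u v hu hD
    have hE : I.E u v := by
      rcases hD with ⟨h, _⟩ | ⟨h, _⟩
      · exact M.valid u v h
      · exact N.valid u v h
    have hsum : y u + y v = 0 ∨ y u + y v = c + 1 ∨ y u + y v = c - 1 ∨
        y u + y v = 1 - c ∨ y u + y v = -c - 1 := by
      rcases hD with ⟨h1, _⟩ | ⟨h1, h2⟩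
      · exact Or.inl (hmatch u v h1)
      · have ht := tight u v hu h1
        have h2' : M.m v ≠ some u := fun hcon => h2 ((M.msymm v u).mp hcon)
        have hor := I.bipartite u v hE
        by_cases huA : u ∈ I.A
        · have hvA : v ∉ I.A := hor.mp huA
          have e1 := vote_pm I M u v h2
          have e2 := vote_pm I M v u h2'
          rw [hA u huA] at e1
          rw [hB v hvA] at e2
          rw [ht]
          rcases e1 with e1 | e1 <;> rcases e2 with e2 | e2 <;> rw [e1, e2] <;>
            first
              | (left; ring1)
              | (right; left; ring1)
              | (right; right; left; ring1)
              | (right; right; right; left; ring1)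
              | (right; right; right; right; ring1)
        · have hvA : v ∈ I.A := by
            by_contra hcon
            exact huA (hor.mpr hcon)
          have e1 := vote_pm I M u v h2
          have e2 := vote_pm I M v u h2'
          rw [hB u huA] at e1
          rw [hA v hvA] at e2
          rw [ht]
          rcases e1 with e1 | e1 <;> rcases e2 with e2 | e2 <;> rw [e1, e2] <;>
            first
              | (left; ring1)
              | (right; left; ring1)
              | (right; right; left; ring1)
              | (right; right; right; left; ring1)
              | (right; right; right; right; ring1)
    by_cases huA : u ∈ I.A
    · have hvA : v ∉ I.A := (I.bipartite u v hE).mp huA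
      exact parity_core hc (hyA u huA) (hyB v hvA) hsum
    · have hvA : v ∈ I.A := by
        by_contra hcon
        exact huA ((I.bipartite u v hE).mpr hcon)
      have hsum' : y v + y u = 0 ∨ y v + y u = c + 1 ∨ y v + y u = c - 1 ∨
          y v + y u = 1 - c ∨ y v + y u = -c - 1 := by
        rw [add_comm (y v) (y u)]
        exact hsum
      rcases parity_core hc (hyA v hvA) (hyB u huA) hsum' with ⟨h1, h2⟩ | ⟨h1, h2⟩
      · exact Or.inl ⟨h2, h1⟩
      · exact Or.inr ⟨h2, h1⟩
  -- totality and disjointness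
  have htot : y v₀ ∈ ({-c, 2 - c, -1, 1, c - 2, c} : Set ℚ) ∨
      y v₀ ∈ ({1 - c, 0, c - 1} : Set ℚ) := by
    by_cases hv : v₀ ∈ I.A
    · have h := hyA v₀ hv
      simp only [Set.mem_insert_iff, Set.mem_singleton_iff] at h ⊢
      rcases h with h|h|h|h|h|h <;> rw [h] <;>
        first | (left; norm_num; done) | (right; norm_num; done)
    · have h := hyB v₀ hv
      simp only [Set.mem_insert_iff, Set.mem_singleton_iff] at h ⊢
      rcases h with h|h|h|h|h|h <;> rw [h] <;>
        first | (left; norm_num; done) | (right; norm_num; done)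
  have hdisj : ∀ q : ℚ, q ∈ ({-c, 2 - c, -1, 1, c - 2, c} : Set ℚ) →
      q ∈ ({1 - c, 0, c - 1} : Set ℚ) → False := by
    intro q h1 h2
    simp only [Set.mem_insert_iff, Set.mem_singleton_iff] at h1 h2
    rcases h1 with rfl|rfl|rfl|rfl|rfl|rfl <;> rcases h2 with h|h|h <;> linarith
  rcases htot with h0 | h0
  · left
    intro v hv
    induction hv with
    | refl => exact h0
    | tail hab hbc ih =>
        rcases hOdEv _ _ hab hbc with ⟨_, h⟩ | ⟨h, _⟩
        · exact h
        · exact absurd h (fun hin => hdisj _ ih hin)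
  · right
    intro v hv
    induction hv with
    | refl => exact h0
    | tail hab hbc ih =>
        rcases hOdEv _ _ hab hbc with ⟨h, _⟩ | ⟨_, h⟩
        · exact (hdisj _ h ih).elim
        · exact h

theorem nice_witness_even_or_odd (I : PMInstance V) (c : ℚ) (hc : 3 < c)
    (hA : ∀ a ∈ I.A, I.w a = c) (hB : ∀ b : V, b ∉ I.A → I.w b = 1)
    (M₁ M₂ : Matching V I.E) (h₁ : popular I M₁) (h₂ : popular I M₂)
    (M : Matching V I.E) (hM : M = M₁ ∨ M = M₂)
    (y : V → ℚ) (hy : NiceWitness I M c y)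
    (v₀ : V) (hv₀ : ∃ z, symmDiffRel M₁ M₂ v₀ z) :
    (∀ v : V, Relation.ReflTransGen (symmDiffRel M₁ M₂) v₀ v →
        y v ∈ ({-c, 2 - c, -1, 1, c - 2, c} : Set ℚ)) ∨
      (∀ v : V, Relation.ReflTransGen (symmDiffRel M₁ M₂) v₀ v →
        y v ∈ ({1 - c, 0, c - 1} : Set ℚ)) := by
  rcases hM with rfl | rfl
  · exact key I c hc hA hB M M₂ h₁ h₂ y hy v₀ hv₀
  · have hcomm : symmDiffRel M₁ M = symmDiffRel M M₁ := by
      funext u v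
      exact propext (or_comm)
    rw [hcomm] at hv₀ ⊢
    exact key I c hc hA hB M M₁ h₂ h₁ y hy v₀ hv₀
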